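/- In the dynamic-programming setting below, the Bellman operator preserves L-Lipschitz continuity in the multiplier variable: if F : [0,∞)^I × X × S → ℝ satisfies |F(γ₁, x, s) − F(γ₂, x, s)| ≤ L·‖γ₁ − γ₂‖₁ for all γ₁, γ₂ ∈ [0,∞)^I, x ∈ X, s ∈ S, then for all γ₁, γ₂ ∈ [0,∞)^I, x ∈ X, s ∈ S one has ℬ(F)(γ₁, x, s) ≤ ℬ(F)(γ₂, x, s) + L·‖γ₁ − γ₂‖₁, where the inequality is in the extended reals. -/

import Mathlib

private lemma erealSubLeIff {a b : EReal} {c : ℝ} : a - (c:EReal) ≤ b ↔ a ≤ b + (c:EReal) :=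
  EReal.sub_le_iff_le_add (Or.inl (EReal.coe_ne_bot c)) (Or.inl (EReal.coe_ne_top c))

/-- The Bellman operator of the recursive dual (inf-sup) problem, with values in the
extended reals: `ℬ(F)(γ,x,s) = inf_{λ ≥ 0} sup_{a ∈ Ã(x,s)} [ r(x,a,s)
+ ∑_i (γ_i g^i(x,a,s) + λ_i (g^i(x,a,s) − ḡ_i)) + β ∑_{s'} π(s'|s) F(γ+λ, ζ(x,a,s), s') ]`. -/
noncomputable def bellman {X S A : Type*} [Fintype S] (I : ℕ)
    (Atil : X → S → Set A) (ζ : X → A → S → X) (π : S → S → ℝ) (β : ℝ)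
    (r : X → A → S → ℝ) (g : Fin I → X → A → S → ℝ) (gbar : Fin I → ℝ)
    (F : (Fin I → ℝ) → X → S → ℝ) (γ : Fin I → ℝ) (x : X) (s : S) : EReal :=
  ⨅ (lam : Fin I → ℝ) (_ : ∀ i, 0 ≤ lam i), ⨆ a ∈ Atil x s,
    (((r x a s + ∑ i, (γ i * g i x a s + lam i * (g i x a s - gbar i))
        + β * ∑ s' : S, π s s' * F (fun i => γ i + lam i) (ζ x a s) s' : ℝ) : EReal))

/-- **the Bellman operator preserves `L`-Lipschitz continuity in the
multiplier.** With finite state and action sets, positive transition probabilities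
summing to one, `β ∈ (0,1)`, bounded data `|r| ≤ R`, `|g^i| ≤ G_i`, nonempty feasible
action sets, and `L = (R + ∑_i G_i)/(1 − β)`: if `F` is `L`-Lipschitz in `γ` for the
`ℓ¹` norm on `[0,∞)^I`, then `ℬ(F)(γ₁,x,s) ≤ ℬ(F)(γ₂,x,s) + L‖γ₁ − γ₂‖₁` for all
`γ₁, γ₂ ∈ [0,∞)^I`, `x`, `s` (in the extended reals). -/
theorem stmt18 {X S A : Type*} [Fintype S] [Nonempty S] [Fintype A] [Nonempty A]
    (I : ℕ) (hI : 1 ≤ I)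
    (Atil : X → S → Set A) (hAtil : ∀ x s, (Atil x s).Nonempty)
    (ζ : X → A → S → X) (π : S → S → ℝ)
    (hπpos : ∀ s s', 0 < π s s') (hπsum : ∀ s, ∑ s' : S, π s s' = 1)
    (β : ℝ) (hβ0 : 0 < β) (hβ1 : β < 1)
    (r : X → A → S → ℝ) (R : ℝ) (hr : ∀ x a s, |r x a s| ≤ R)
    (g : Fin I → X → A → S → ℝ) (G : Fin I → ℝ) (hg : ∀ i x a s, |g i x a s| ≤ G i)
    (gbar : Fin I → ℝ)
    (L : ℝ) (hL : L = (R + ∑ i, G i) / (1 - β))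
    (F : (Fin I → ℝ) → X → S → ℝ)
    (hF : ∀ γ₁ γ₂ : Fin I → ℝ, (∀ i, 0 ≤ γ₁ i) → (∀ i, 0 ≤ γ₂ i) → ∀ x s,
      |F γ₁ x s - F γ₂ x s| ≤ L * ∑ i, |γ₁ i - γ₂ i|) :
    ∀ γ₁ γ₂ : Fin I → ℝ, (∀ i, 0 ≤ γ₁ i) → (∀ i, 0 ≤ γ₂ i) → ∀ x s,
      bellman I Atil ζ π β r g gbar F γ₁ x s
        ≤ bellman I Atil ζ π β r g gbar F γ₂ x s
          + ((L * ∑ i, |γ₁ i - γ₂ i| : ℝ) : EReal) := by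
  intro γ₁ γ₂ h₁ h₂ x s
  obtain ⟨a₀, ha₀⟩ := hAtil x s
  have hR : 0 ≤ R := le_trans (abs_nonneg _) (hr x a₀ s)
  have hGi : ∀ i, 0 ≤ G i := fun i => le_trans (abs_nonneg _) (hg i x a₀ s)
  have hGsum : 0 ≤ ∑ i, G i := Finset.sum_nonneg fun i _ => hGi i
  have hβ' : (0:ℝ) < 1 - β := by linarith
  have hL0 : 0 ≤ L := by rw [hL]; exact div_nonneg (by linarith) hβ'.le
  have hLβ : (∑ i, G i) + β * L ≤ L := by
    have : L * (1 - β) = R + ∑ i, G i := by rw [hL]; field_simp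
    nlinarith
  set D : ℝ := ∑ i, |γ₁ i - γ₂ i| with hD
  have hD0 : 0 ≤ D := Finset.sum_nonneg fun i _ => abs_nonneg _
  set c : ℝ := L * D with hc
  -- key real inequality
  have key : ∀ (lam : Fin I → ℝ), (∀ i, 0 ≤ lam i) → ∀ a,
      r x a s + ∑ i, (γ₁ i * g i x a s + lam i * (g i x a s - gbar i))
        + β * ∑ s' : S, π s s' * F (fun i => γ₁ i + lam i) (ζ x a s) s'
      ≤ r x a s + ∑ i, (γ₂ i * g i x a s + lam i * (g i x a s - gbar i))
        + β * ∑ s' : S, π s s' * F (fun i => γ₂ i + lam i) (ζ x a s) s' + c := by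
    intro lam hlam a
    have hA : ∑ i, (γ₁ i * g i x a s + lam i * (g i x a s - gbar i))
        - ∑ i, (γ₂ i * g i x a s + lam i * (g i x a s - gbar i))
        ≤ (∑ i, G i) * D := by
      rw [← Finset.sum_sub_distrib]
      have : ∀ i ∈ Finset.univ, (γ₁ i * g i x a s + lam i * (g i x a s - gbar i))
          - (γ₂ i * g i x a s + lam i * (g i x a s - gbar i))
          ≤ (∑ j, G j) * |γ₁ i - γ₂ i| := by
        intro i _
        have h1 : (γ₁ i * g i x a s + lam i * (g i x a s - gbar i))
            - (γ₂ i * g i x a s + lam i * (g i x a s - gbar i))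
            = (γ₁ i - γ₂ i) * g i x a s := by ring
        rw [h1]
        calc (γ₁ i - γ₂ i) * g i x a s ≤ |(γ₁ i - γ₂ i) * g i x a s| := le_abs_self _
          _ = |γ₁ i - γ₂ i| * |g i x a s| := abs_mul _ _
          _ ≤ |γ₁ i - γ₂ i| * G i :=
              mul_le_mul_of_nonneg_left (hg i x a s) (abs_nonneg _)
          _ ≤ (∑ j, G j) * |γ₁ i - γ₂ i| := by
              rw [mul_comm]
              exact mul_le_mul_of_nonneg_right
                (Finset.single_le_sum (fun j _ => hGi j) (Finset.mem_univ i)) (abs_nonneg _)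
      calc ∑ i, ((γ₁ i * g i x a s + lam i * (g i x a s - gbar i))
              - (γ₂ i * g i x a s + lam i * (g i x a s - gbar i)))
          ≤ ∑ i, (∑ j, G j) * |γ₁ i - γ₂ i| := Finset.sum_le_sum this
        _ = (∑ j, G j) * D := by rw [hD, Finset.mul_sum]
    have hB : ∑ s' : S, π s s' * F (fun i => γ₁ i + lam i) (ζ x a s) s'
        - ∑ s' : S, π s s' * F (fun i => γ₂ i + lam i) (ζ x a s) s' ≤ L * D := by
      rw [← Finset.sum_sub_distrib]
      have hterm : ∀ s' ∈ Finset.univ, π s s' * F (fun i => γ₁ i + lam i) (ζ x a s) s'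
          - π s s' * F (fun i => γ₂ i + lam i) (ζ x a s) s' ≤ π s s' * (L * D) := by
        intro s' _
        rw [← mul_sub]
        refine mul_le_mul_of_nonneg_left ?_ (hπpos s s').le
        calc F (fun i => γ₁ i + lam i) (ζ x a s) s'
              - F (fun i => γ₂ i + lam i) (ζ x a s) s'
            ≤ |F (fun i => γ₁ i + lam i) (ζ x a s) s'
              - F (fun i => γ₂ i + lam i) (ζ x a s) s'| := le_abs_self _
          _ ≤ L * ∑ i, |(γ₁ i + lam i) - (γ₂ i + lam i)| :=
              hF _ _ (fun i => add_nonneg (h₁ i) (hlam i))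
                (fun i => add_nonneg (h₂ i) (hlam i)) _ _
          _ = L * D := by
              rw [hD]; congr 1
              exact Finset.sum_congr rfl fun i _ => by rw [add_sub_add_right_eq_sub]
      calc ∑ s' : S, (π s s' * F (fun i => γ₁ i + lam i) (ζ x a s) s'
              - π s s' * F (fun i => γ₂ i + lam i) (ζ x a s) s')
          ≤ ∑ s' : S, π s s' * (L * D) := Finset.sum_le_sum hterm
        _ = L * D := by rw [← Finset.sum_mul, hπsum s, one_mul]
    have hB' : β * (∑ s' : S, π s s' * F (fun i => γ₁ i + lam i) (ζ x a s) s'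
        - ∑ s' : S, π s s' * F (fun i => γ₂ i + lam i) (ζ x a s) s') ≤ β * (L * D) :=
      mul_le_mul_of_nonneg_left hB hβ0.le
    have hfin : (∑ i, G i) * D + β * (L * D) ≤ L * D := by nlinarith
    rw [hc]; nlinarith [hA, hB', hfin]
  -- pass to EReal
  unfold bellman
  set f₂ : (Fin I → ℝ) → EReal := fun lam => ⨆ a ∈ Atil x s,
    (((r x a s + ∑ i, (γ₂ i * g i x a s + lam i * (g i x a s - gbar i))
        + β * ∑ s' : S, π s s' * F (fun i => γ₂ i + lam i) (ζ x a s) s' : ℝ) : EReal))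
    with hf₂
  have step1 : ∀ (lam : Fin I → ℝ), (∀ i, 0 ≤ lam i) →
      (⨆ a ∈ Atil x s,
        (((r x a s + ∑ i, (γ₁ i * g i x a s + lam i * (g i x a s - gbar i))
            + β * ∑ s' : S, π s s' * F (fun i => γ₁ i + lam i) (ζ x a s) s' : ℝ) : EReal)))
      ≤ f₂ lam + (c : EReal) := by
    intro lam hlam
    refine iSup₂_le fun a ha => ?_
    have h1 : (((r x a s + ∑ i, (γ₁ i * g i x a s + lam i * (g i x a s - gbar i))
        + β * ∑ s' : S, π s s' * F (fun i => γ₁ i + lam i) (ζ x a s) s' : ℝ) : EReal))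
        ≤ (((r x a s + ∑ i, (γ₂ i * g i x a s + lam i * (g i x a s - gbar i))
        + β * ∑ s' : S, π s s' * F (fun i => γ₂ i + lam i) (ζ x a s) s' : ℝ) : EReal))
          + (c : EReal) := by
      rw [← EReal.coe_add, EReal.coe_le_coe_iff]
      exact key lam hlam a
    refine h1.trans (add_le_add_left ?_ _)
    exact le_iSup₂ (f := fun a _ =>
      (((r x a s + ∑ i, (γ₂ i * g i x a s + lam i * (g i x a s - gbar i))
        + β * ∑ s' : S, π s s' * F (fun i => γ₂ i + lam i) (ζ x a s) s' : ℝ) : EReal))) a ha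
  calc (⨅ (lam : Fin I → ℝ) (_ : ∀ i, 0 ≤ lam i), ⨆ a ∈ Atil x s,
        (((r x a s + ∑ i, (γ₁ i * g i x a s + lam i * (g i x a s - gbar i))
            + β * ∑ s' : S, π s s' * F (fun i => γ₁ i + lam i) (ζ x a s) s' : ℝ) : EReal)))
      ≤ ⨅ (lam : Fin I → ℝ) (_ : ∀ i, 0 ≤ lam i), (f₂ lam + (c : EReal)) :=
        le_iInf fun lam => le_iInf fun hlam =>
          (iInf₂_le lam hlam).trans (step1 lam hlam)
    _ ≤ (⨅ (lam : Fin I → ℝ) (_ : ∀ i, 0 ≤ lam i), f₂ lam) + (c : EReal) := by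
        rw [← erealSubLeIff]
        exact le_iInf fun lam => le_iInf fun hlam =>
          erealSubLeIff.mpr (iInf₂_le lam hlam)
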